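/- Let E be a finite-dimensional real inner product space, T ⊆ E a linear subspace, M ≥ 1, G_1, …, G_M ∈ E, and let P* ∈ T be the minimizer of Q(P) = max_{1≤i≤M} ⟨G_i, P⟩ + (1/2)‖P‖² over T. Then max_{1≤i≤M} ⟨G_i, P*⟩ = −‖P*‖²; consequently ⟨G_i, P*⟩ ≤ −‖P*‖² for every i ∈ {1, …, M}. -/
import Mathlib


open RealInnerProductSpace

/-- At the minimizer `P*` of `Q(P) = max_i ⟪G i, P⟫ + (1/2)‖P‖²` over the subspace `T`,
`max_i ⟪G i, P*⟫ = -‖P*‖²` and hence `⟪G i, P*⟫ ≤ -‖P*‖²` for every `i`. -/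
theorem stmt_2 {E : Type*} [NormedAddCommGroup E] [InnerProductSpace ℝ E]
    [FiniteDimensional ℝ E] (T : Submodule ℝ E) (M : ℕ) (hM : 1 ≤ M)
    (G : Fin M → E) (Q : E → ℝ)
    (hQ : ∀ P : E, Q P =
      (Finset.univ.sup' ⟨⟨0, hM⟩, Finset.mem_univ _⟩ fun i => ⟪G i, P⟫) +
        (1 / 2) * ‖P‖ ^ 2)
    (Pstar : E) (hmem : Pstar ∈ T) (hmin : ∀ P ∈ T, Q Pstar ≤ Q P) :
    (Finset.univ.sup' ⟨⟨0, hM⟩, Finset.mem_univ _⟩ fun i => ⟪G i, Pstar⟫) =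
        -‖Pstar‖ ^ 2 ∧
      ∀ i, ⟪G i, Pstar⟫ ≤ -‖Pstar‖ ^ 2 := by
  have hne : (Finset.univ : Finset (Fin M)).Nonempty := ⟨⟨0, hM⟩, Finset.mem_univ _⟩
  set m : ℝ := Finset.univ.sup' ⟨⟨0, hM⟩, Finset.mem_univ _⟩ fun i => ⟪G i, Pstar⟫ with hm
  set s : ℝ := ‖Pstar‖ ^ 2 with hs
  have hs0 : 0 ≤ s := by positivity
  -- sup' scales under nonneg scalar
  have hsup : ∀ c : ℝ, 0 ≤ c →
      (Finset.univ.sup' ⟨⟨0, hM⟩, Finset.mem_univ _⟩ fun i => ⟪G i, c • Pstar⟫) = c * m := by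
    intro c hc
    have hinner : ∀ i : Fin M, ⟪G i, c • Pstar⟫ = c * ⟪G i, Pstar⟫ := by
      intro i; exact real_inner_smul_right _ _ _
    apply le_antisymm
    · apply Finset.sup'_le
      intro i _
      rw [hinner i]
      exact mul_le_mul_of_nonneg_left (Finset.le_sup' (fun i => ⟪G i, Pstar⟫) (Finset.mem_univ i)) hc
    · obtain ⟨i, -, hi⟩ := Finset.exists_mem_eq_sup' hne (fun i => ⟪G i, Pstar⟫)
      have : c * m = ⟪G i, c • Pstar⟫ := by rw [hinner i, hm, hi]
      rw [this]
      exact Finset.le_sup' (fun i => ⟪G i, c • Pstar⟫) (Finset.mem_univ i)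
  -- key inequality
  have key : ∀ c : ℝ, 0 ≤ c → m + (1/2) * s ≤ c * m + (1/2) * c ^ 2 * s := by
    intro c hc
    have h := hmin (c • Pstar) (T.smul_mem c hmem)
    rw [hQ, hQ, hsup c hc] at h
    have hnorm : ‖c • Pstar‖ ^ 2 = c ^ 2 * s := by
      rw [norm_smul, hs, mul_pow]
      simp [sq_abs]
    rw [hnorm] at h
    linarith
  have h0 : m + (1/2) * s ≤ 0 := by
    have := key 0 le_rfl; simpa using this
  have h1 : m + s ≤ 0 := by
    by_contra h
    push_neg at h
    set ε : ℝ := (m + s) / (s + 1) with hε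
    have hεpos : 0 < ε := by positivity
    have hεle : ε ≤ 1/2 := by
      rw [hε, div_le_iff₀ (by linarith)]
      nlinarith
    have hc : (0:ℝ) ≤ 1 - ε := by linarith
    have := key (1 - ε) hc
    have hεs : ε * (s + 1) = m + s := by
      rw [hε, div_mul_cancel₀]; linarith
    nlinarith [sq_nonneg ε, mul_nonneg hεpos.le hs0]
  have h2 : 0 ≤ m + s := by
    by_contra h
    push_neg at h
    set ε : ℝ := -(m + s) / (s + 1) with hε
    have hεpos : 0 < ε := by
      apply div_pos (by linarith) (by linarith)
    have hc : (0:ℝ) ≤ 1 + ε := by linarith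
    have := key (1 + ε) hc
    have hεs : ε * (s + 1) = -(m + s) := by
      rw [hε, div_mul_cancel₀]; linarith
    nlinarith [sq_nonneg ε, mul_nonneg hεpos.le hs0]
  have hms : m = -s := by linarith
  refine ⟨hms, fun i => ?_⟩
  calc ⟪G i, Pstar⟫ ≤ m := Finset.le_sup' (fun i => ⟪G i, Pstar⟫) (Finset.mem_univ i)
    _ = -s := hms
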